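/- Let $w \in S_n$ and let $x$ with $1 \leq x < n$ satisfy $|w(x) - w(x+1)| \geq 2$. Then the descent set of $(w s_x)^{-1}$ equals the descent set of $w^{-1}$; that is, for every $i \in \{1,\dots,n-1\}$, $w^{-1}(i) > w^{-1}(i+1)$ if and only if $(w s_x)^{-1}(i) > (w s_x)^{-1}(i+1)$. -/
import Mathlib

lemma swap_lt_aux {n : ℕ} (x x1 : Fin n) (hx1 : (x1 : ℕ) = (x : ℕ) + 1)
    (a b : Fin n) (hab : a ≠ b) (h1 : ¬(a = x ∧ b = x1)) (h2 : ¬(a = x1 ∧ b = x)) :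
    (b < a ↔ Equiv.swap x x1 b < Equiv.swap x x1 a) := by
  rw [Equiv.swap_apply_def, Equiv.swap_apply_def]
  split_ifs <;>
    (simp only [Fin.lt_def, Fin.ext_iff, ne_eq] at *) <;> omega

/-- If `|w(x) - w(x+1)| ≥ 2` then `w·s_x` and `w` have inverses
with the same descent set: for every adjacent pair of values `i, i+1`,
`w⁻¹(i) > w⁻¹(i+1)` iff `(w s_x)⁻¹(i) > (w s_x)⁻¹(i+1)`. -/
theorem stmt3 (n : ℕ) (w : Equiv.Perm (Fin n)) (x x1 : Fin n)
    (hx1 : (x1 : ℕ) = (x : ℕ) + 1)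
    (hgap : ((w x : ℕ) + 2 ≤ (w x1 : ℕ)) ∨ ((w x1 : ℕ) + 2 ≤ (w x : ℕ))) :
    ∀ i i1 : Fin n, (i1 : ℕ) = (i : ℕ) + 1 →
      (w⁻¹ i1 < w⁻¹ i ↔ (w * Equiv.swap x x1)⁻¹ i1 < (w * Equiv.swap x x1)⁻¹ i) := by
  intro i i1 hi
  have hinv : (w * Equiv.swap x x1)⁻¹ = (Equiv.swap x x1) * w⁻¹ := by
    rw [mul_inv_rev, Equiv.swap_inv]
  rw [hinv]
  simp only [Equiv.Perm.mul_apply]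
  set a := w⁻¹ i with ha
  set b := w⁻¹ i1 with hb
  have hwa : w a = i := by simp [ha]
  have hwb : w b = i1 := by simp [hb]
  have hab : a ≠ b := by
    intro h
    have : i = i1 := by rw [← hwa, ← hwb, h]
    have := congrArg (Fin.val) this
    omega
  have h1 : ¬(a = x ∧ b = x1) := by
    rintro ⟨hax, hbx1⟩
    rw [hax] at hwa; rw [hbx1] at hwb
    rw [hwa, hwb] at hgap
    omega
  have h2 : ¬(a = x1 ∧ b = x) := by
    rintro ⟨hax1, hbx⟩
    rw [hax1] at hwa; rw [hbx] at hwb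
    rw [hwa, hwb] at hgap
    omega
  exact swap_lt_aux x x1 hx1 a b hab h1 h2
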